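/- Let σ > 0 and ξ < 0. For every real s with s > −1, the moment generating function of the exGPD(σ, ξ) distribution satisfies M(s) = ∫_{−∞}^{log(−σ/ξ)} e^{sy} (e^y/σ)(1 + ξ e^y/σ)^(−1/ξ − 1) dy = −(1/ξ) (−σ/ξ)^s · B(s + 1, −1/ξ), where B(x, y) = Γ(x)Γ(y)/Γ(x + y) is the Beta function. -/

import Mathlib

/-- For `σ > 0`, `ξ < 0`, `s > −1`, the mgf of exGPD(σ, ξ) is
`M(s) = −(1/ξ)(−σ/ξ)^s B(s+1, −1/ξ)` with `B(x,y) = Γ(x)Γ(y)/Γ(x+y)`. -/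
lemma real_beta {a b : ℝ} (ha : 0 < a) (hb : 0 < b) :
    ∫ x in (0:ℝ)..1, x ^ (a - 1) * (1 - x) ^ (b - 1) =
      Real.Gamma a * Real.Gamma b / Real.Gamma (a + b) := by
  have key : Complex.betaIntegral a b =
      ((∫ x in (0:ℝ)..1, x ^ (a - 1) * (1 - x) ^ (b - 1) : ℝ) : ℂ) := by
    rw [Complex.betaIntegral, ← intervalIntegral.integral_ofReal]
    refine intervalIntegral.integral_congr fun x hx => ?_
    rw [Set.uIcc_of_le zero_le_one] at hx
    push_cast
    rw [Complex.ofReal_cpow hx.1 (a - 1), Complex.ofReal_cpow (by linarith [hx.2] : (0:ℝ) ≤ 1 - x) (b - 1)]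
    push_cast
    ring
  have h := Complex.Gamma_mul_Gamma_eq_betaIntegral (s := (a : ℂ)) (t := (b : ℂ))
    (by simpa using ha) (by simpa using hb)
  rw [key, ← Complex.ofReal_add, Complex.Gamma_ofReal, Complex.Gamma_ofReal,
    Complex.Gamma_ofReal, ← Complex.ofReal_mul, ← Complex.ofReal_mul] at h
  have h' := Complex.ofReal_injective h
  have hG : Real.Gamma (a + b) ≠ 0 := (Real.Gamma_pos_of_pos (by linarith)).ne'
  field_simp
  linarith [h']

theorem exGPD_mgf_neg_shape (σ ξ : ℝ) (hσ : 0 < σ) (hξ : ξ < 0) (s : ℝ) (hs : -1 < s) :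
    ∫ y in Set.Iio (Real.log (-σ / ξ)),
        Real.exp (s * y) * ((Real.exp y / σ) * (1 + ξ * Real.exp y / σ) ^ (-1 / ξ - 1)) =
      -(1 / ξ) * (-σ / ξ) ^ s *
        (Real.Gamma (s + 1) * Real.Gamma (-1 / ξ) / Real.Gamma (s + 1 + -1 / ξ)) := by
  set c : ℝ := -σ / ξ with hcdef
  have hc : 0 < c := by rw [hcdef, div_pos_iff]; right; exact ⟨by linarith, hξ⟩
  set β : ℝ := -1 / ξ - 1 with hβdef
  set g : ℝ → ℝ := fun t => c ^ (s + 1) / σ * (t ^ s * (1 - t) ^ β) with hg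
  have himg : (fun y => Real.exp y / c) '' Set.Iio (Real.log c) = Set.Ioo 0 1 := by
    ext t
    constructor
    · rintro ⟨y, hy, rfl⟩
      refine ⟨by positivity, ?_⟩
      rw [div_lt_one hc]
      calc Real.exp y < Real.exp (Real.log c) := Real.exp_lt_exp.2 hy
        _ = c := Real.exp_log hc
    · rintro ⟨ht0, ht1⟩
      refine ⟨Real.log (c * t), ?_, ?_⟩
      · exact Real.log_lt_log (by positivity) (by nlinarith)
      · show Real.exp (Real.log (c * t)) / c = t
        rw [Real.exp_log (by positivity)]
        field_simp
  have hchg := MeasureTheory.integral_image_eq_integral_abs_deriv_smul (s := Set.Iio (Real.log c)) (f := fun y => Real.exp y / c)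
    (f' := fun y => Real.exp y / c) measurableSet_Iio
    (fun y _ => ((Real.hasDerivAt_exp y).div_const c).hasDerivWithinAt)
    (fun y _ z _ h => by field_simp at h; exact Real.exp_injective h) g
  rw [himg] at hchg
  have hpt : ∀ y, Real.exp (s * y) * ((Real.exp y / σ) * (1 + ξ * Real.exp y / σ) ^ β)
      = |Real.exp y / c| • g (Real.exp y / c) := by
    intro y
    have he : (0:ℝ) < Real.exp y := Real.exp_pos y
    have h1 : 1 - Real.exp y / c = 1 + ξ * Real.exp y / σ := by
      rw [hcdef]; field_simp [hσ.ne', hξ.ne]; ring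
    have h2 : (Real.exp y / c) ^ s = Real.exp (s * y) / c ^ s := by
      rw [Real.div_rpow he.le hc.le, mul_comm, Real.exp_mul]
    have h3 : c ^ (s + 1) = c ^ s * c := by
      rw [Real.rpow_add hc, Real.rpow_one]
    have h4 : (0:ℝ) < c ^ s := Real.rpow_pos_of_pos hc s
    rw [smul_eq_mul, abs_of_pos (by positivity), hg]
    simp only [h1, h2, h3]
    field_simp
  rw [show (fun y => Real.exp (s * y) * ((Real.exp y / σ) *
        (1 + ξ * Real.exp y / σ) ^ (-1 / ξ - 1)))
      = fun y => |Real.exp y / c| • g (Real.exp y / c) from funext hpt, ← hchg, hg]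
  rw [MeasureTheory.integral_const_mul]
  rw [← MeasureTheory.integral_Ioc_eq_integral_Ioo,
    ← intervalIntegral.integral_of_le zero_le_one]
  have hβ : β = -1 / ξ - 1 := hβdef
  have : ∫ t in (0:ℝ)..1, t ^ s * (1 - t) ^ β
      = Real.Gamma (s + 1) * Real.Gamma (-1 / ξ) / Real.Gamma (s + 1 + -1 / ξ) := by
    have := real_beta (a := s + 1) (b := -1 / ξ) (by linarith) (by rw [div_pos_iff]; right; exact ⟨by norm_num, hξ⟩)
    simpa [hβ] using this
  rw [this]
  have h3 : c ^ (s + 1) = c ^ s * c := by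
    rw [Real.rpow_add hc, Real.rpow_one]
  have hco : c / σ = -(1 / ξ) := by
    rw [hcdef]
    rw [div_div, mul_comm ξ σ, ← div_div]
    simp [neg_div, div_self hσ.ne']
  have key : c ^ s * c / σ = -(1 / ξ) * c ^ s := by
    rw [mul_div_assoc, hco]; ring
  rw [h3, key]
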